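/- Let 0 ≤ ε < 4 and let F: ℝ → [0,1] and T: ℝ → [0,1] be monotonically nonincreasing functions with F(t) → 1, T(t) → 1 as t → −∞ and F(t) → 0, T(t) → 0 as t → +∞, satisfying T(t) ≤ min(F(t) + √ε/2, 1) for all t. Then the Riemann–Stieltjes integral ∫ T(t) dF(t) (taken so the area under the parametric ROC curve t ↦ (F(t), T(t)) is computed, i.e., from t = +∞ to t = −∞) is at most 1/2 + √ε/2 − ε/8. -/

import Mathlib

open MeasureTheory Filter

private lemma roc_meas_Iic (F : ℝ → ℝ) (hFbot : Tendsto F atBot (nhds 1))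
    (μ : Measure ℝ)
    (hμ : ∀ a b, a ≤ b → μ (Set.Ioc a b) = ENNReal.ofReal (F a - F b)) (x : ℝ) :
    μ (Set.Iic x) = ENNReal.ofReal (1 - F x) := by
  have hun : Set.Iic x = ⋃ n : ℕ, Set.Ioc (x - n) x := by
    ext y
    simp only [Set.mem_Iic, Set.mem_iUnion, Set.mem_Ioc]
    constructor
    · intro hy
      obtain ⟨n, hn⟩ := exists_nat_gt (x - y)
      exact ⟨n, by linarith, hy⟩
    · rintro ⟨n, _, h⟩; exact h
  have hmono : Monotone (fun n : ℕ => Set.Ioc (x - n) x) := by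
    intro n m h
    refine Set.Ioc_subset_Ioc_left ?_
    have hnm : (n : ℝ) ≤ m := by exact_mod_cast h
    linarith
  have h1 := tendsto_measure_iUnion_atTop (μ := μ) hmono
  rw [← hun] at h1
  have hxb : Tendsto (fun n : ℕ => x - (n : ℝ)) atTop atBot := by
    simp only [sub_eq_add_neg]
    exact tendsto_atBot_add_const_left atTop x
      (tendsto_neg_atTop_atBot.comp tendsto_natCast_atTop_atTop)
  have h2 : Tendsto (fun n : ℕ => μ (Set.Ioc (x - n) x)) atTop
      (nhds (ENNReal.ofReal (1 - F x))) := by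
    have heq : (fun n : ℕ => μ (Set.Ioc (x - n) x))
        = fun n : ℕ => ENNReal.ofReal (F (x - n) - F x) := by
      funext n
      exact hμ _ _ (by linarith [Nat.cast_nonneg (α := ℝ) n])
    rw [heq]
    exact (ENNReal.continuous_ofReal.tendsto _).comp ((hFbot.comp hxb).sub_const (F x))
  exact tendsto_nhds_unique h1 h2

private lemma roc_meas_univ (F : ℝ → ℝ) (hFbot : Tendsto F atBot (nhds 1))
    (hFtop : Tendsto F atTop (nhds 0))
    (μ : Measure ℝ)
    (hμ : ∀ a b, a ≤ b → μ (Set.Ioc a b) = ENNReal.ofReal (F a - F b)) :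
    μ Set.univ = 1 := by
  have hun : (Set.univ : Set ℝ) = ⋃ n : ℕ, Set.Iic (n : ℝ) := by
    ext y
    simp only [Set.mem_univ, Set.mem_iUnion, Set.mem_Iic, true_iff]
    obtain ⟨n, hn⟩ := exists_nat_gt y
    exact ⟨n, hn.le⟩
  have hmono : Monotone (fun n : ℕ => Set.Iic ((n : ℕ) : ℝ)) := by
    intro n m h
    exact Set.Iic_subset_Iic.2 (by exact_mod_cast h)
  have h1 := tendsto_measure_iUnion_atTop (μ := μ) hmono
  rw [← hun] at h1
  have h2 : Tendsto (fun n : ℕ => μ (Set.Iic (n : ℝ))) atTop (nhds 1) := by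
    have heq : (fun n : ℕ => μ (Set.Iic (n : ℝ)))
        = fun n : ℕ => ENNReal.ofReal (1 - F n) := by
      funext n
      exact roc_meas_Iic F hFbot μ hμ n
    rw [heq]
    have h3 : Tendsto (fun n : ℕ => (1 : ℝ) - F n) atTop (nhds 1) := by
      have := (hFtop.comp (tendsto_natCast_atTop_atTop (R := ℝ))).const_sub 1
      simpa using this
    have := (ENNReal.continuous_ofReal.tendsto _).comp h3
    simpa [Function.comp_def] using this
  exact tendsto_nhds_unique h1 h2

private lemma roc_meas_level (F : ℝ → ℝ)
    (hFmono : ∀ s t, s ≤ t → F t ≤ F s)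
    (hFbot : Tendsto F atBot (nhds 1)) (hFtop : Tendsto F atTop (nhds 0))
    (μ : Measure ℝ)
    (hμ : ∀ a b, a ≤ b → μ (Set.Ioc a b) = ENNReal.ofReal (F a - F b))
    (v : ℝ) (hv : v < 1) :
    μ {a : ℝ | 1 - v ≤ F a} ≤ ENNReal.ofReal v := by
  set S : Set ℝ := {a : ℝ | 1 - v ≤ F a} with hS
  obtain ⟨t₀, ht₀⟩ := (hFtop.eventually_lt_const (by linarith : (0:ℝ) < 1 - v)).exists
  have hbdd : ∀ a ∈ S, a ≤ t₀ := by
    intro a ha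
    by_contra h
    push_neg at h
    have := hFmono t₀ a h.le
    have : (1:ℝ) - v ≤ F t₀ := le_trans ha this
    linarith
  rcases Set.eq_empty_or_nonempty S with hSe | hSne
  · rw [hSe]; simp
  have hbdd' : BddAbove S := ⟨t₀, hbdd⟩
  set k := sSup S with hk
  by_cases hkS : k ∈ S
  · have hsub : S ⊆ Set.Iic k := fun a ha => le_csSup hbdd' ha
    calc μ S ≤ μ (Set.Iic k) := measure_mono hsub
      _ = ENNReal.ofReal (1 - F k) := roc_meas_Iic F hFbot μ hμ k
      _ ≤ ENNReal.ofReal v := ENNReal.ofReal_le_ofReal (by have := hkS; simp only [hS, Set.mem_setOf_eq] at this; linarith)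
  · have hsub : S ⊆ Set.Iio k := by
      intro a ha
      rcases lt_or_eq_of_le (le_csSup hbdd' ha) with h | h
      · exact h
      · exfalso; apply hkS; rw [hk, ← h]; exact ha
    have hun : Set.Iio k = ⋃ n : ℕ, Set.Iic (k - 1 / (n + 1)) := by
      ext y
      simp only [Set.mem_Iio, Set.mem_iUnion, Set.mem_Iic]
      constructor
      · intro hy
        obtain ⟨n, hn⟩ := exists_nat_one_div_lt (sub_pos.2 hy)
        exact ⟨n, by linarith⟩
      · rintro ⟨n, hn⟩
        have : (0:ℝ) < 1 / (n + 1) := by positivity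
        linarith
    have hmono : Monotone (fun n : ℕ => Set.Iic (k - 1 / ((n : ℝ) + 1))) := by
      intro n m h
      apply Set.Iic_subset_Iic.2
      have hnm : ((n : ℝ) + 1) ≤ (m : ℝ) + 1 := by exact_mod_cast Nat.succ_le_succ h
      have := one_div_le_one_div_of_le (by positivity : (0:ℝ) < (n:ℝ) + 1) hnm
      linarith
    have h1 := tendsto_measure_iUnion_atTop (μ := μ) hmono
    rw [← hun] at h1
    have hub : ∀ n : ℕ, μ (Set.Iic (k - 1 / ((n : ℝ) + 1))) ≤ ENNReal.ofReal v := by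
      intro n
      obtain ⟨a, haS, hlt⟩ := exists_lt_of_lt_csSup hSne
        (sub_lt_self k (by positivity : (0:ℝ) < 1 / ((n:ℝ) + 1)))
      have hFa : (1:ℝ) - v ≤ F a := haS
      have := hFmono (k - 1 / ((n : ℝ) + 1)) a hlt.le
      rw [roc_meas_Iic F hFbot μ hμ]
      exact ENNReal.ofReal_le_ofReal (by linarith)
    calc μ S ≤ μ (Set.Iio k) := measure_mono hsub
      _ ≤ ENNReal.ofReal v := le_of_tendsto h1 (Eventually.of_forall hub)

/-- The ROC-area Riemann–Stieltjes integral `∫_{t=∞}^{t=−∞} T(t) dF(t)` for a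
nonincreasing `F` is formalized as the Lebesgue integral of `T` against the
(positive) Lebesgue–Stieltjes measure `μ` of `F` traversed from `+∞` to `−∞`,
i.e. any measure `μ` with `μ (Ioc a b) = F a − F b` for `a ≤ b`. -/
theorem roc_auc_upper_bound (ε : ℝ) (hε0 : 0 ≤ ε) (hε4 : ε < 4)
    (F T : ℝ → ℝ)
    (hFrange : ∀ t, F t ∈ Set.Icc (0 : ℝ) 1) (hTrange : ∀ t, T t ∈ Set.Icc (0 : ℝ) 1)
    (hFmono : ∀ s t, s ≤ t → F t ≤ F s) (hTmono : ∀ s t, s ≤ t → T t ≤ T s)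
    (hFbot : Tendsto F atBot (nhds 1)) (hFtop : Tendsto F atTop (nhds 0))
    (hTbot : Tendsto T atBot (nhds 1)) (hTtop : Tendsto T atTop (nhds 0))
    (hdom : ∀ t, T t ≤ min (F t + Real.sqrt ε / 2) 1)
    (μ : Measure ℝ) [IsFiniteMeasure μ]
    (hμ : ∀ a b, a ≤ b → μ (Set.Ioc a b) = ENNReal.ofReal (F a - F b)) :
    ∫ t, T t ∂μ ≤ 1 / 2 + Real.sqrt ε / 2 - ε / 8 := by
  have huniv : μ Set.univ = 1 := roc_meas_univ F hFbot hFtop μ hμ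
  set r : ℝ := Real.sqrt ε / 2 with hr
  have hr0 : 0 ≤ r := by positivity
  have hr1 : r < 1 := by
    have h := Real.sq_sqrt hε0
    nlinarith [Real.sqrt_nonneg ε]
  set c : ℝ := 1 - r with hc
  have hc0 : 0 < c := by linarith
  have hFmeas : Measurable F := Antitone.measurable (fun a b h => hFmono a b h)
  have hTmeas : Measurable T := Antitone.measurable (fun a b h => hTmono a b h)
  set g : ℝ → ℝ := fun t => max (1 - (F t + r)) 0 with hg
  have hgmeas : Measurable g :=
    (measurable_const.sub (hFmeas.add_const r)).max measurable_const
  have hgnn : ∀ t, 0 ≤ g t := fun t => le_max_right _ _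
  have hgle1 : ∀ t, g t ≤ 1 := by
    intro t
    have := (hFrange t).1
    apply max_le (by linarith) (by norm_num)
  have hTle : ∀ t, T t ≤ 1 - g t := by
    intro t
    have hd := hdom t
    have h1 : min (F t + r) 1 = 1 - max (1 - (F t + r)) 0 := by
      rcases le_total (F t + r) 1 with h | h
      · rw [min_eq_left h, max_eq_left (by linarith)]; ring
      · rw [min_eq_right h, max_eq_right (by linarith)]; ring
    calc T t ≤ min (F t + r) 1 := hd
      _ = 1 - g t := h1
  have hTint : Integrable T μ := by
    refine ⟨hTmeas.aestronglyMeasurable, HasFiniteIntegral.of_bounded (C := 1) ?_⟩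
    filter_upwards with t
    rw [Real.norm_eq_abs, abs_le]
    exact ⟨by linarith [(hTrange t).1], (hTrange t).2⟩
  have hgint : Integrable g μ := by
    refine ⟨hgmeas.aestronglyMeasurable, HasFiniteIntegral.of_bounded (C := 1) ?_⟩
    filter_upwards with t
    rw [Real.norm_eq_abs, abs_le]
    exact ⟨by linarith [hgnn t], hgle1 t⟩
  have hA : ∫ t, T t ∂μ ≤ ∫ t, (1 - g t) ∂μ :=
    integral_mono hTint ((integrable_const 1).sub hgint) hTle
  have hB : ∫ t, (1 - g t) ∂μ = 1 - ∫ t, g t ∂μ := by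
    rw [integral_sub (integrable_const 1) hgint, integral_const, measureReal_def, huniv]
    simp
  -- lower bound on ∫ g
  have heq : ∫ t, g t ∂μ = (∫⁻ t, ENNReal.ofReal (g t) ∂μ).toReal :=
    integral_eq_lintegral_of_nonneg_ae (Eventually.of_forall hgnn)
      hgmeas.aestronglyMeasurable
  have hlay : ∫⁻ t, ENNReal.ofReal (g t) ∂μ = ∫⁻ t in Set.Ioi (0:ℝ), μ {a | t < g a} :=
    lintegral_eq_lintegral_meas_lt μ (Eventually.of_forall hgnn) hgmeas.aemeasurable
  have hlb : ∀ t ∈ Set.Ioo (0:ℝ) c, ENNReal.ofReal (c - t) ≤ μ {a | t < g a} := by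
    intro t ht
    have hsub : {a : ℝ | t < g a}ᶜ ⊆ {a : ℝ | 1 - (r + t) ≤ F a} := by
      intro a ha
      simp only [Set.mem_compl_iff, Set.mem_setOf_eq, not_lt] at ha
      have : 1 - (F a + r) ≤ t := le_trans (le_max_left _ _) ha
      simp only [Set.mem_setOf_eq]
      linarith
    have hrt1 : r + t < 1 := by have := ht.2; simp only [hc] at this; linarith
    have hBm : μ {a : ℝ | t < g a}ᶜ ≤ ENNReal.ofReal (r + t) :=
      le_trans (measure_mono hsub) (roc_meas_level F hFmono hFbot hFtop μ hμ (r + t) hrt1)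
    have hmeasset : MeasurableSet {a : ℝ | t < g a} := measurableSet_lt measurable_const hgmeas
    have hkey : μ {a : ℝ | t < g a} = 1 - μ {a : ℝ | t < g a}ᶜ := by
      have h := measure_compl hmeasset.compl (measure_ne_top μ _)
      rw [compl_compl, huniv] at h
      exact h
    rw [hkey]
    have h2 : ENNReal.ofReal (c - t) = 1 - ENNReal.ofReal (r + t) := by
      have : c - t = 1 - (r + t) := by simp only [hc]; ring
      rw [this, ← ENNReal.ofReal_one,
        ← ENNReal.ofReal_sub 1 (by linarith [ht.1] : (0:ℝ) ≤ r + t)]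
    rw [h2]
    exact tsub_le_tsub_left hBm 1
  have hint2 : ∫⁻ t in Set.Ioo (0:ℝ) c, ENNReal.ofReal (c - t) = ENNReal.ofReal (c^2/2) := by
    rw [← ofReal_integral_eq_lintegral_ofReal]
    · congr 1
      rw [← MeasureTheory.integral_Ioc_eq_integral_Ioo,
        ← intervalIntegral.integral_of_le hc0.le,
        intervalIntegral.integral_sub (intervalIntegrable_const (c := c)) intervalIntegral.intervalIntegrable_id,
        intervalIntegral.integral_const, integral_id]
      simp
      ring
    · exact ((continuous_const.sub continuous_id).integrableOn_Icc).mono_set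
        Set.Ioo_subset_Icc_self
    · filter_upwards [ae_restrict_mem measurableSet_Ioo] with t ht
      simp only [Pi.zero_apply]
      linarith [ht.2]
  have hchain : ENNReal.ofReal (c^2/2) ≤ ∫⁻ t, ENNReal.ofReal (g t) ∂μ := by
    rw [hlay, ← hint2]
    calc ∫⁻ t in Set.Ioo (0:ℝ) c, ENNReal.ofReal (c - t)
        ≤ ∫⁻ t in Set.Ioo (0:ℝ) c, μ {a | t < g a} :=
          setLIntegral_mono' measurableSet_Ioo hlb
      _ ≤ ∫⁻ t in Set.Ioi (0:ℝ), μ {a | t < g a} :=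
          lintegral_mono_set Set.Ioo_subset_Ioi_self
  have hfin : ∫⁻ t, ENNReal.ofReal (g t) ∂μ ≠ ⊤ := by
    apply ne_of_lt
    calc ∫⁻ t, ENNReal.ofReal (g t) ∂μ ≤ ∫⁻ _, 1 ∂μ :=
          lintegral_mono fun t => ENNReal.ofReal_le_one.2 (hgle1 t)
      _ = μ Set.univ := lintegral_one
      _ = 1 := huniv
      _ < ⊤ := ENNReal.one_lt_top
  have hC : c^2/2 ≤ ∫ t, g t ∂μ := by
    rw [heq]
    calc c^2/2 = (ENNReal.ofReal (c^2/2)).toReal := (ENNReal.toReal_ofReal (by positivity)).symm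
      _ ≤ (∫⁻ t, ENNReal.ofReal (g t) ∂μ).toReal := ENNReal.toReal_mono hfin hchain
  have hrsq : r^2 = ε/4 := by
    rw [hr, div_pow, Real.sq_sqrt hε0]
    norm_num
  have : ∫ t, T t ∂μ ≤ 1 - c^2/2 := by
    rw [hB] at hA
    linarith
  have hceq : c^2 = 1 - 2*r + r^2 := by rw [hc]; ring
  rw [hr] at *
  nlinarith [hrsq]
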